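/- On the 5×5 Hex board, the set {(1,1),(1,2),(1,3),(1,4),(2,4),(3,3),(4,2),(5,2),(5,3),(5,4),(5,5)} is a winning path of length 11, and no winning path on the 5×5 board has length greater than 11. -/

import Mathlib

/-- Hex adjacency on integer coordinates. -/
def HexAdj (a b : ℤ × ℤ) : Prop :=
  (b.1 - a.1, b.2 - a.2) ∈
    ({(1,0), (-1,0), (0,1), (0,-1), (1,-1), (-1,1)} : Set (ℤ × ℤ))

/-- Cell of the n×n Hex board. -/
def OnBoard (n : ℕ) (a : ℤ × ℤ) : Prop :=
  1 ≤ a.1 ∧ a.1 ≤ (n : ℤ) ∧ 1 ≤ a.2 ∧ a.2 ≤ (n : ℤ)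

/-- A winning connection for Black: a set of board cells containing a chain of
pairwise-adjacent cells from a cell in the top row (y = 1) to a cell in the
bottom row (y = n). -/
def IsWinningConnection (n : ℕ) (S : Finset (ℤ × ℤ)) : Prop :=
  (∀ c ∈ S, OnBoard n c) ∧
  ∃ p : List (ℤ × ℤ), ∃ hp : p ≠ [],
    (∀ c ∈ p, c ∈ S) ∧ List.Chain' HexAdj p ∧
    (p.head hp).2 = 1 ∧ (p.getLast hp).2 = (n : ℤ)

/-- A winning path: a minimal winning connection. -/
def IsWinningPath (n : ℕ) (S : Finset (ℤ × ℤ)) : Prop :=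
  IsWinningConnection n S ∧ ∀ T ⊂ S, ¬ IsWinningConnection n T

def path5 : Finset (ℤ × ℤ) :=
  {(1,1),(1,2),(1,3),(1,4),(2,4),(3,3),(4,2),(5,2),(5,3),(5,4),(5,5)}

/- ### Decidability of the basic predicates -/

lemma hexAdj_iff (a b : ℤ × ℤ) : HexAdj a b ↔
    (b.1 = a.1 + 1 ∧ b.2 = a.2) ∨ (b.1 = a.1 - 1 ∧ b.2 = a.2) ∨
    (b.1 = a.1 ∧ b.2 = a.2 + 1) ∨ (b.1 = a.1 ∧ b.2 = a.2 - 1) ∨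
    (b.1 = a.1 + 1 ∧ b.2 = a.2 - 1) ∨ (b.1 = a.1 - 1 ∧ b.2 = a.2 + 1) := by
  simp only [HexAdj, Set.mem_insert_iff, Set.mem_singleton_iff, Prod.mk.injEq]
  omega

instance : ∀ a b, Decidable (HexAdj a b) :=
  fun a b => decidable_of_iff' _ (hexAdj_iff a b)

instance : ∀ n a, Decidable (OnBoard n a) := fun n a => by unfold OnBoard; infer_instance

/- ### Part 1 : minimality of path5 via invariant sets -/

lemma chain_stays {S R : Finset (ℤ × ℤ)}
    (h2 : ∀ a ∈ R, ∀ b ∈ S, HexAdj a b → b ∈ R) :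
    ∀ (p : List (ℤ × ℤ)) (a : ℤ × ℤ), List.Chain HexAdj a p →
      (∀ c ∈ p, c ∈ S) → a ∈ R → (a :: p).getLast (by simp) ∈ R := by
  intro p
  induction p with
  | nil => intro a _ _ ha; simpa using ha
  | cons b q ih =>
    intro a hch hmem ha
    replace hch : HexAdj a b ∧ List.Chain HexAdj b q := List.isChain_cons_cons.1 hch
    have hb : b ∈ R := h2 a ha b (hmem b (by simp)) hch.1
    have := ih b hch.2 (fun c hc => hmem c (by simp [hc])) hb
    simpa using this

lemma no_win {S R : Finset (ℤ × ℤ)}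
    (h1 : ∀ c ∈ S, c.2 = 1 → c ∈ R)
    (h2 : ∀ a ∈ R, ∀ b ∈ S, HexAdj a b → b ∈ R)
    (h3 : ∀ c ∈ R, c.2 ≠ 5) : ¬ IsWinningConnection 5 S := by
  rintro ⟨-, p, hp, hmem, hchain, hhead, hlast⟩
  cases p with
  | nil => exact hp rfl
  | cons a rest =>
    have ha : a ∈ R := h1 a (hmem a (by simp)) hhead
    have hch : List.Chain HexAdj a rest := hchain
    have hlastR := chain_stays h2 rest a hch (fun c hc => hmem c (by simp [hc])) ha
    exact h3 _ hlastR (by simpa using hlast)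

lemma no_win' (rm : ℤ × ℤ) (R : Finset (ℤ × ℤ))
    (P1 : ∀ c ∈ path5.erase rm, c.2 = 1 → c ∈ R)
    (P2 : ∀ a ∈ R, ∀ b ∈ path5.erase rm, HexAdj a b → b ∈ R)
    (P3 : ∀ c ∈ R, c.2 ≠ 5)
    {T : Finset (ℤ × ℤ)} (hT : T ⊆ path5.erase rm) : ¬ IsWinningConnection 5 T := by
  apply no_win (R := R ∩ T)
  · intro c hc h1
    exact Finset.mem_inter.2 ⟨P1 c (hT hc) h1, hc⟩
  · intro a ha b hb hadj
    exact Finset.mem_inter.2 ⟨P2 a (Finset.mem_inter.1 ha).1 b (hT hb) hadj, hb⟩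
  · intro c hc
    exact P3 c (Finset.mem_inter.1 hc).1

/- ### Part 2 : the DFS bound -/

def nbrs (c : ℤ × ℤ) : List (ℤ × ℤ) :=
  [(c.1+1,c.2),(c.1-1,c.2),(c.1,c.2+1),(c.1,c.2-1),(c.1+1,c.2-1),(c.1-1,c.2+1)]

lemma hexAdj_iff_mem (a b : ℤ × ℤ) : HexAdj a b ↔ b ∈ nbrs a := by
  rw [hexAdj_iff]
  simp [nbrs, Prod.ext_iff]

def cand (vis : List (ℤ × ℤ)) (c : ℤ × ℤ) : List (ℤ × ℤ) :=
  if c.2 = 5 then [] else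
  (nbrs c).filter fun b => decide (OnBoard 5 b) && !(decide (b.2 = 1))
    && !(vis.contains b) && vis.all (fun v => !(decide (HexAdj v b)))

def ext : Nat → List (ℤ × ℤ) → ℤ × ℤ → Nat
  | 0, _, _ => 0
  | f+1, vis, c => (cand vis c).foldr (fun b acc => max (1 + ext f (c::vis) b) acc) 0

lemma le_foldr_max {α : Type*} (f : α → ℕ) {b : α} {l : List α} (hb : b ∈ l) :
    f b ≤ l.foldr (fun x acc => max (f x) acc) 0 := by
  induction l with
  | nil => cases hb
  | cons a t ih =>
    rcases List.mem_cons.1 hb with h | h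
    · subst h; exact le_max_left _ _
    · exact le_trans (ih h) (le_max_right _ _)

lemma mem_cand {vis : List (ℤ × ℤ)} {c b : ℤ × ℤ}
    (h1 : HexAdj c b) (h2 : OnBoard 5 b) (h3 : b.2 ≠ 1) (h4 : b ∉ vis)
    (h5 : ∀ v ∈ vis, ¬ HexAdj v b) (h6 : c.2 ≠ 5) : b ∈ cand vis c := by
  unfold cand
  rw [if_neg h6, List.mem_filter]
  refine ⟨(hexAdj_iff_mem c b).1 h1, ?_⟩
  simp only [List.contains, Bool.and_eq_true, decide_eq_true_eq, Bool.not_eq_true',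
    decide_eq_false_iff_not, List.all_eq_true, List.elem_eq_mem, Bool.not_eq_true]
  exact ⟨⟨⟨h2, h3⟩, h4⟩, fun v hv => by simp [h5 v hv]⟩

/-- every cell with y = 5 is last -/
def Last5 : List (ℤ × ℤ) → Prop
  | [] => True
  | a :: l => (a.2 = 5 → l = []) ∧ Last5 l

/-- induced-path condition: no adjacency between non-consecutive cells -/
def Ind : List (ℤ × ℤ) → Prop
  | [] => True
  | a :: l => (∀ b ∈ l.tail, ¬ HexAdj a b) ∧ Ind l

lemma ext_bound : ∀ (rest : List (ℤ × ℤ)) (f : ℕ) (vis : List (ℤ × ℤ)) (c : ℤ × ℤ),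
    rest.length ≤ f →
    List.Chain' HexAdj (c :: rest) →
    (∀ b ∈ rest, OnBoard 5 b) →
    (∀ b ∈ rest, b.2 ≠ 1) →
    (c :: rest).Nodup →
    (∀ b ∈ rest, b ∉ vis) →
    (∀ v ∈ vis, ∀ b ∈ rest, ¬ HexAdj v b) →
    Ind (c :: rest) →
    Last5 (c :: rest) →
    rest.length ≤ ext f vis c := by
  intro rest
  induction rest with
  | nil => intro f vis c _ _ _ _ _ _ _ _ _; simp
  | cons b rest' ih =>
    intro f vis c hf hchain hboard hy1 hnodup hvis hvisadj hind hlast5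
    cases f with
    | zero => simp at hf
    | succ f' =>
      have hcb : HexAdj c b ∧ List.Chain' HexAdj (b :: rest') := List.isChain_cons_cons.1 hchain
      have hnd : c ∉ b :: rest' ∧ (b :: rest').Nodup := List.nodup_cons.1 hnodup
      have hc5 : c.2 ≠ 5 := fun h => by simpa using hlast5.1 h
      have hbc : b ∈ cand vis c :=
        mem_cand hcb.1 (hboard b (by simp)) (hy1 b (by simp)) (hvis b (by simp))
          (fun v hv => hvisadj v hv b (by simp)) hc5
      have hrec : rest'.length ≤ ext f' (c :: vis) b := by
        apply ih f' (c :: vis) b (by simpa using hf) hcb.2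
          (fun x hx => hboard x (by simp [hx])) (fun x hx => hy1 x (by simp [hx]))
          hnd.2
        · intro x hx
          simp only [List.mem_cons, not_or]
          exact ⟨fun h => hnd.1 (by simp [h ▸ hx]), hvis x (by simp [hx])⟩
        · intro v hv x hx
          rcases List.mem_cons.1 hv with h | h
          · subst h; exact hind.1 x hx
          · exact hvisadj v h x (by simp [hx])
        · exact hind.2
        · exact hlast5.2
      calc (b :: rest').length = 1 + rest'.length := by simp [Nat.add_comm]
        _ ≤ 1 + ext f' (c :: vis) b := by omega
        _ ≤ (cand vis c).foldr (fun x acc => max (1 + ext f' (c::vis) x) acc) 0 :=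
            le_foldr_max (fun x => 1 + ext f' (c :: vis) x) hbc
        _ = ext (f'+1) vis c := rfl

/- duplicate split -/
lemma exists_dup_split {α : Type*} {l : List α} (h : ¬ l.Nodup) :
    ∃ (a : α) (l1 l2 l3 : List α), l = l1 ++ a :: (l2 ++ a :: l3) := by
  induction l with
  | nil => exact absurd List.nodup_nil h
  | cons x xs ih =>
    by_cases hx : x ∈ xs
    · obtain ⟨s, t, rfl⟩ := List.append_of_mem hx
      exact ⟨x, [], s, t, rfl⟩
    · have : ¬ xs.Nodup := fun hn => h (List.nodup_cons.2 ⟨hx, hn⟩)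
      obtain ⟨a, l1, l2, l3, rfl⟩ := ih this
      exact ⟨a, x :: l1, l2, l3, rfl⟩

lemma last5_of_splits {l : List (ℤ × ℤ)}
    (h : ∀ l1 b l2, l = l1 ++ b :: l2 → b.2 = 5 → l2 = []) : Last5 l := by
  induction l with
  | nil => trivial
  | cons a t ih =>
    refine ⟨fun h5 => h [] a t rfl h5, ih ?_⟩
    intro l1 b l2 ht h5
    exact h (a :: l1) b l2 (by simp [ht]) h5

lemma ind_of_splits {l : List (ℤ × ℤ)}
    (h : ∀ l1 a x l2 b l3, l = l1 ++ a :: x :: l2 ++ b :: l3 → ¬ HexAdj a b) : Ind l := by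
  induction l with
  | nil => trivial
  | cons c t ih =>
    constructor
    · intro b hb
      cases t with
      | nil => cases hb
      | cons x t' =>
        obtain ⟨s, u, hsu⟩ := List.append_of_mem (show b ∈ t' by simpa using hb)
        exact h [] c x s b u (by simp [hsu])
    · apply ih
      intro l1 a x l2 b l3 ht
      exact h (c :: l1) a x l2 b l3 (by simp [ht])


lemma head?_stable {α : Type*} (l1 m m' : List α) (a : α) :
    (l1 ++ a :: m).head? = (l1 ++ a :: m').head? := by cases l1 <;> simp

lemma getLast?_cons_append {α : Type*} (l1 : List α) (a : α) (m : List α) :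
    (l1 ++ a :: m).getLast? = (a :: m).getLast? := by
  rw [List.getLast?_append, List.getLast?_eq_getLast (l := a :: m) (by simp)]
  rfl

lemma getLast?_of_suffix {α : Type*} {l1 l2 : List α} (h : l1 <:+ l2) (hne : l1 ≠ []) :
    l2.getLast? = l1.getLast? := by
  obtain ⟨t, rfl⟩ := h
  rw [List.getLast?_append, List.getLast?_eq_getLast (l := l1) hne]
  rfl

lemma chain'_graft {α : Type*} {R : α → α → Prop} {l1 m l3 : List α} {a : α}
    (h1 : List.Chain' R (l1 ++ a :: m)) (h2 : List.Chain' R (a :: l3)) :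
    List.Chain' R (l1 ++ a :: l3) := by
  change List.IsChain R (l1 ++ a :: m) at h1
  change List.IsChain R (l1 ++ a :: l3)
  rw [List.isChain_append] at h1 ⊢
  exact ⟨h1.1, h2, by simpa using h1.2.2⟩

noncomputable def board5 : Finset (ℤ × ℤ) := Finset.Icc 1 5 ×ˢ Finset.Icc 1 5

lemma mem_board5 {c : ℤ × ℤ} (h : OnBoard 5 c) : c ∈ board5 := by
  obtain ⟨h1, h2, h3, h4⟩ := h
  simp only [board5, Finset.mem_product, Finset.mem_Icc]
  exact ⟨⟨h1, by exact_mod_cast h2⟩, ⟨h3, by exact_mod_cast h4⟩⟩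

set_option maxHeartbeats 2000000 in
lemma ext_top (x : ℤ) (h1 : 1 ≤ x) (h5 : x ≤ 5) : ext 24 [] (x, 1) ≤ 10 := by
  interval_cases x
  · decide
  · decide
  · decide
  · decide
  · decide

theorem optimal_path_5 :
    IsWinningPath 5 path5 ∧ path5.card = 11 ∧
    ∀ T : Finset (ℤ × ℤ), IsWinningPath 5 T → T.card ≤ 11 := by
  refine ⟨⟨⟨by decide, ?_⟩, ?_⟩, by decide, ?_⟩
  · -- the winning chain in path5
    refine ⟨[(1,1),(1,2),(1,3),(1,4),(2,4),(3,3),(4,2),(5,2),(5,3),(5,4),(5,5)],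
      by decide, by decide, by simp only [List.Chain', List.isChain_cons_cons, List.isChain_singleton, hexAdj_iff]; norm_num, by decide, by decide⟩
  · -- minimality
    intro T hT hTwin
    obtain ⟨c, hcS, hcT⟩ := Finset.exists_of_ssubset hT
    have hsub : T ⊆ path5.erase c := Finset.subset_erase.2 ⟨hT.1, hcT⟩
    fin_cases hcS
    · exact no_win' (1,1) ∅ (by decide) (by decide) (by decide) hsub hTwin
    · exact no_win' (1,2) {(1,1)} (by decide) (by decide) (by decide) hsub hTwin
    · exact no_win' (1,3) {(1,1),(1,2)} (by decide) (by decide) (by decide) hsub hTwin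
    · exact no_win' (1,4) {(1,1),(1,2),(1,3)} (by decide) (by decide) (by decide) hsub hTwin
    · exact no_win' (2,4) {(1,1),(1,2),(1,3),(1,4)} (by decide) (by decide) (by decide) hsub hTwin
    · exact no_win' (3,3) {(1,1),(1,2),(1,3),(1,4),(2,4)} (by decide) (by decide) (by decide) hsub hTwin
    · exact no_win' (4,2) {(1,1),(1,2),(1,3),(1,4),(2,4),(3,3)} (by decide) (by decide) (by decide) hsub hTwin
    · exact no_win' (5,2) {(1,1),(1,2),(1,3),(1,4),(2,4),(3,3),(4,2)} (by decide) (by decide) (by decide) hsub hTwin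
    · exact no_win' (5,3) {(1,1),(1,2),(1,3),(1,4),(2,4),(3,3),(4,2),(5,2)} (by decide) (by decide) (by decide) hsub hTwin
    · exact no_win' (5,4) {(1,1),(1,2),(1,3),(1,4),(2,4),(3,3),(4,2),(5,2),(5,3)} (by decide) (by decide) (by decide) hsub hTwin
    · exact no_win' (5,5) (path5.erase (5,5)) (by decide) (by decide) (by decide) hsub hTwin
  · -- upper bound
    rintro T ⟨⟨hboard, p0, hp0, hmem0, hchain0, hhead0, hlast0⟩, hmin⟩
    classical
    have hex : ∃ n, ∃ q : List (ℤ × ℤ),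
        ((∀ c ∈ q, c ∈ T) ∧ List.Chain' HexAdj q ∧
          (∃ a, q.head? = some a ∧ a.2 = 1) ∧ (∃ b, q.getLast? = some b ∧ b.2 = 5)) ∧
        q.length = n :=
      ⟨p0.length, p0, ⟨hmem0, hchain0,
        ⟨p0.head hp0, List.head?_eq_head hp0, hhead0⟩,
        ⟨p0.getLast hp0, List.getLast?_eq_getLast hp0, by exact_mod_cast hlast0⟩⟩, rfl⟩
    obtain ⟨p, hP, hlen⟩ := Nat.find_spec hex
    obtain ⟨hmem, hchain, ⟨a0, hhead?, ha0⟩, ⟨b0, hlast?, hb0⟩⟩ := hP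
    have hminlen : ∀ q : List (ℤ × ℤ), (∀ c ∈ q, c ∈ T) → List.Chain' HexAdj q →
        (∃ a, q.head? = some a ∧ a.2 = 1) → (∃ b, q.getLast? = some b ∧ b.2 = 5) →
        p.length ≤ q.length := by
      intro q h1 h2 h3 h4
      by_contra hlt
      push_neg at hlt
      rw [hlen] at hlt
      exact Nat.find_min hex hlt ⟨q, ⟨h1, h2, h3, h4⟩, rfl⟩
    have hPn : p ≠ [] := by
      intro h
      rw [h] at hhead?
      simp at hhead?
    -- p has no duplicates
    have hnodup : p.Nodup := by
      by_contra hnd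
      obtain ⟨a, l1, l2, l3, hs⟩ := exists_dup_split hnd
      have hchain2 : List.Chain' HexAdj (l1 ++ a :: (l2 ++ a :: l3)) := hs ▸ hchain
      have hsfx : List.Chain' HexAdj (a :: l3) :=
        hchain.suffix ⟨l1 ++ a :: l2, by simp [hs]⟩
      have hq := hminlen (l1 ++ a :: l3)
        (fun c hc => hmem c (by rw [hs]; simp at hc ⊢; tauto))
        (chain'_graft hchain2 hsfx)
        ⟨a0, by rw [head?_stable l1 l3 (l2 ++ a :: l3) a, ← hs]; exact hhead?, ha0⟩
        ⟨b0, by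
          rw [getLast?_of_suffix (show (a :: l3) <:+ l1 ++ a :: l3 from ⟨l1, rfl⟩) (by simp),
            ← getLast?_of_suffix (show (a :: l3) <:+ p from ⟨l1 ++ a :: l2, by simp [hs]⟩)
              (by simp)]
          exact hlast?, hb0⟩
      rw [hs] at hq
      simp at hq
      omega
    -- only the head has y = 1
    have htail1 : ∀ b ∈ p.tail, b.2 ≠ 1 := by
      intro b hb hb1
      obtain ⟨hd, tl, hpc⟩ := List.exists_cons_of_ne_nil hPn
      rw [hpc] at hb
      obtain ⟨s, t, hst⟩ := List.append_of_mem (show b ∈ tl by simpa using hb)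
      have hsfx : (b :: t) <:+ p := ⟨hd :: s, by rw [hpc, hst]; simp⟩
      have hq := hminlen (b :: t)
        (fun c hc => hmem c (hsfx.subset hc))
        (hchain.suffix hsfx)
        ⟨b, rfl, hb1⟩
        ⟨b0, by rw [← getLast?_of_suffix hsfx (by simp)]; exact hlast?, hb0⟩
      rw [hpc, hst] at hq
      simp at hq
      omega
    -- every y = 5 cell is last
    have hsplit5 : ∀ l1 (b : ℤ × ℤ) l2, p = l1 ++ b :: l2 → b.2 = 5 → l2 = [] := by
      intro l1 b l2 hs hb5
      by_contra hne
      have hq := hminlen (l1 ++ [b])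
        (fun c hc => hmem c (by rw [hs]; simp at hc ⊢; tauto))
        (hchain.prefix ⟨l2, by rw [hs]; simp⟩)
        ⟨a0, by rw [head?_stable l1 [] l2 b, ← hs]; exact hhead?, ha0⟩
        ⟨b, by rw [getLast?_cons_append l1 b []]; rfl, hb5⟩
      rw [hs] at hq
      simp only [List.length_append, List.length_cons, List.length_nil] at hq
      exact hne (List.length_eq_zero_iff.1 (by omega))
    have hlast5 : Last5 p := last5_of_splits hsplit5
    -- p is an induced path
    have hindsplit : ∀ l1 (a : ℤ × ℤ) x l2 (b : ℤ × ℤ) l3,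
        p = l1 ++ a :: x :: l2 ++ b :: l3 → ¬ HexAdj a b := by
      intro l1 a x l2 b l3 hs hab
      have hchain2 : List.Chain' HexAdj (l1 ++ a :: (x :: l2 ++ b :: l3)) := by
        have h := hchain
        rw [hs] at h
        simpa using h
      have hbl3 : List.Chain' HexAdj (b :: l3) :=
        hchain.suffix ⟨l1 ++ a :: x :: l2, by rw [hs]⟩
      have hq := hminlen (l1 ++ a :: b :: l3)
        (fun c hc => hmem c (by rw [hs]; simp at hc ⊢; tauto))
        (chain'_graft hchain2 (List.isChain_cons_cons.2 ⟨hab, hbl3⟩))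
        ⟨a0, by
          have h0 : p.head? = l1.head?.or (some a) := by rw [hs]; simp
          rw [show (l1 ++ a :: b :: l3).head? = l1.head?.or (some a) by simp, ← h0]
          exact hhead?, ha0⟩
        ⟨b0, by
          rw [getLast?_of_suffix (show (b :: l3) <:+ l1 ++ a :: b :: l3 from
              ⟨l1 ++ [a], by simp⟩) (by simp),
            ← getLast?_of_suffix (show (b :: l3) <:+ p from
              ⟨l1 ++ a :: x :: l2, by simp [hs]⟩) (by simp)]
          exact hlast?, hb0⟩
      rw [hs] at hq
      simp only [List.length_append, List.length_cons, List.length_nil] at hq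
      omega
    have hInd : Ind p := ind_of_splits hindsplit
    -- T equals the cell set of p
    have hTsub : p.toFinset ⊆ T := fun c hc => hmem c (List.mem_toFinset.1 hc)
    have hTeq : T = p.toFinset := by
      by_contra hne
      have hss : p.toFinset ⊂ T := lt_of_le_of_ne hTsub (fun h => hne h.symm)
      have hh : p.head hPn = a0 := by
        rw [List.head?_eq_head hPn] at hhead?
        exact Option.some.inj hhead?
      have hl : p.getLast hPn = b0 := by
        rw [List.getLast?_eq_getLast hPn] at hlast?
        exact Option.some.inj hlast?
      exact hmin _ hss ⟨fun c hc => hboard c (hTsub hc), p, hPn,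
        fun c hc => List.mem_toFinset.2 hc, hchain,
        by rw [hh]; exact ha0, by rw [hl]; exact_mod_cast hb0⟩
    -- length bound via the DFS function
    have hlen25 : p.length ≤ 25 := by
      have hsub : p.toFinset ⊆ board5 := fun x hx => mem_board5 (hboard x (hTsub hx))
      have hcard : p.toFinset.card ≤ board5.card := Finset.card_le_card hsub
      have hb : board5.card = 25 := by
        rw [board5, Finset.card_product]
        simp [Int.card_Icc]
      rw [List.toFinset_card_of_nodup hnodup, hb] at hcard
      exact hcard
    obtain ⟨c, rest, hpc⟩ := List.exists_cons_of_ne_nil hPn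
    have hcT : c ∈ T := hmem c (by rw [hpc]; simp)
    have hcB : OnBoard 5 c := hboard c hcT
    have hc1 : c.2 = 1 := by
      rw [hpc] at hhead?
      rw [show a0 = c from (Option.some.inj hhead?).symm] at ha0
      exact ha0
    have hrest : rest.length ≤ ext 24 [] c := by
      apply ext_bound rest 24 [] c
      · rw [hpc] at hlen25; simp at hlen25; omega
      · rw [hpc] at hchain; exact hchain
      · intro b hb; exact hboard b (hmem b (by rw [hpc]; simp [hb]))
      · intro b hb; exact htail1 b (by rw [hpc]; simpa using hb)
      · rw [hpc] at hnodup; exact hnodup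
      · intro b _ hbv; exact absurd hbv List.not_mem_nil
      · intro v hv; exact absurd hv List.not_mem_nil
      · rw [hpc] at hInd; exact hInd
      · rw [hpc] at hlast5; exact hlast5
    have hext : ext 24 [] c ≤ 10 := by
      obtain ⟨x, y⟩ := c
      obtain ⟨hx1, hx5, -, -⟩ := hcB
      have hy : y = 1 := hc1
      subst hy
      exact ext_top x hx1 hx5
    rw [hTeq, List.toFinset_card_of_nodup hnodup, hpc]
    simp only [List.length_cons]
    omega
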